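/- arXiv:1411.0178 — 2 statements merged into one kernel-verified Lean document; each statement's English description precedes it below -/
import Mathlib

section
/- For n ≥ 2 and d ≥ 1, every automorphism of the Kneser graph/complex K(n, S) with S = {1, ..., nd+1} is induced by a permutation of S; i.e., the automorphism group of K(n,S) is isomorphic to Sym(S). -/
/-- The Kneser graph on the `n`-element subsets of a type `α`:
two `n`-subsets are adjacent iff they are disjoint. -/
def kneserGraph (n : ℕ) (α : Type*) [DecidableEq α] :
    SimpleGraph {s : Finset α // s.card = n} where
  Adj v w := v ≠ w ∧ Disjoint v.1 w.1
  symm := ⟨fun _ _ h => ⟨h.1.symm, h.2.symm⟩⟩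
  loopless := ⟨fun _ h => h.1 rfl⟩

open Finset

namespace KneserAux
variable {m n : ℕ}

/-- strict monotonicity of `j ↦ (m-j).choose (n-j)`. -/
lemma choose_anti_strict (hm : n + 1 ≤ m) : ∀ {i j : ℕ}, i < j → j ≤ n →
    (m - j).choose (n - j) < (m - i).choose (n - i) := by
  intro i j hij hj
  induction j with
  | zero => omega
  | succ k ih =>
    have hstep : (m - (k+1)).choose (n - (k+1)) < (m - k).choose (n - k) := by
      have h1 : m - k = (m - (k+1)) + 1 := by omega
      have h2 : n - k = (n - (k+1)) + 1 := by omega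
      have h3 : (m - k).choose (n - k) =
          (m - (k+1)).choose (n - (k+1)) + (m - (k+1)).choose ((n - (k+1)) + 1) := by
        rw [h1, h2]; exact Nat.choose_succ_succ _ _
      have h4 : 0 < (m - (k+1)).choose ((n - (k+1)) + 1) := Nat.choose_pos (by omega)
      omega
    rcases Nat.lt_or_ge i k with h | h
    · exact hstep.trans (ih h (by omega))
    · have : i = k := by omega
      subst this; exact hstep

lemma choose_pos' (hnm : n ≤ m) {i : ℕ} (hi : i ≤ n) : 0 < (m - i).choose (n - i) :=
  Nat.choose_pos (by omega)

/-- The sunflower/star lemma for cliques in the Johnson scheme. -/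
lemma sunflower {α : Type*} [DecidableEq α] (r : ℕ) (hr : 1 ≤ r) (G : Finset (Finset α))
    (hsize : r + 2 ≤ G.card) (hcard : ∀ W ∈ G, W.card = r)
    (hpair : ∀ W ∈ G, ∀ W' ∈ G, W ≠ W' → (W ∪ W').card = r + 1) :
    ∃ V : Finset α, V.card = r - 1 ∧ ∀ W ∈ G, V ⊆ W := by
  have hG1 : 1 < G.card := by omega
  obtain ⟨W₁, h1, W₂, h2, h12⟩ := one_lt_card.mp hG1
  have hinter : ∀ W ∈ G, ∀ W' ∈ G, W ≠ W' → (W ∩ W').card = r - 1 := by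
    intro W hW W' hW' hne
    have := card_union_add_card_inter W W'
    rw [hpair W hW W' hW' hne, hcard W hW, hcard W' hW'] at this
    omega
  have key : ∀ W ∈ G, ∀ W' ∈ G, W ≠ W' → ∀ x ∈ W', x ∉ W → W' ∩ W = W'.erase x := by
    intro W hW W' hW' hne x hx hxn
    have hsub : W' ∩ W ⊆ W'.erase x := by
      intro y hy
      rw [mem_inter] at hy
      exact mem_erase.mpr ⟨fun h => hxn (h ▸ hy.2), hy.1⟩
    refine eq_of_subset_of_card_le hsub ?_
    rw [card_erase_of_mem hx, hcard W' hW', hinter W' hW' W hW (Ne.symm hne)]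
  set V := W₁ ∩ W₂ with hV
  have hVcard : V.card = r - 1 := hinter W₁ h1 W₂ h2 h12
  refine ⟨V, hVcard, ?_⟩
  by_contra hcon
  push_neg at hcon
  obtain ⟨W₃, h3, hV3⟩ := hcon
  -- generic "outside point" argument
  have outside : ∀ W ∈ G, W ≠ W₁ → W ≠ W₂ → ∀ x ∈ W, x ∉ W₁ ∪ W₂ → W.erase x = V := by
    intro W hW hne1 hne2 x hx hxn
    rw [mem_union] at hxn; push_neg at hxn
    have e1 : W ∩ W₁ = W.erase x := key W₁ h1 W hW (Ne.symm hne1) x hx hxn.1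
    have e2 : W ∩ W₂ = W.erase x := key W₂ h2 W hW (Ne.symm hne2) x hx hxn.2
    have hsub : W.erase x ⊆ V := by
      intro y hy
      rw [hV, mem_inter]
      have m1 : y ∈ W ∩ W₁ := e1 ▸ hy
      have m2 : y ∈ W ∩ W₂ := e2 ▸ hy
      exact ⟨(mem_inter.mp m1).2, (mem_inter.mp m2).2⟩
    refine (eq_of_subset_of_card_le hsub ?_)
    rw [hVcard, card_erase_of_mem hx, hcard W hW]
  have hW3sub : W₃ ⊆ W₁ ∪ W₂ := by
    intro x hx
    by_contra hxn
    have hne1 : W₃ ≠ W₁ := by rintro rfl; exact hxn (mem_union_left _ hx)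
    have hne2 : W₃ ≠ W₂ := by rintro rfl; exact hxn (mem_union_right _ hx)
    have := outside W₃ h3 hne1 hne2 x hx hxn
    exact hV3 (this ▸ erase_subset x W₃)
  have hall : ∀ W ∈ G, W ⊆ W₁ ∪ W₂ := by
    intro W hW
    by_cases e1 : W = W₁; · exact e1 ▸ subset_union_left
    by_cases e2 : W = W₂; · exact e2 ▸ subset_union_right
    by_cases e3 : W = W₃; · exact e3 ▸ hW3sub
    intro x hx
    by_contra hxn
    have herase : W.erase x = V := outside W hW e1 e2 x hx hxn
    have hxn3 : x ∉ W₃ := fun h => hxn (hW3sub h)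
    have e : W ∩ W₃ = W.erase x := key W₃ h3 W hW (fun h => e3 h.symm) x hx hxn3
    have : V ⊆ W₃ := by
      intro y hy
      have : y ∈ W ∩ W₃ := by rw [e, herase]; exact hy
      exact (mem_inter.mp this).2
    exact hV3 this
  have hGsub : G ⊆ (W₁ ∪ W₂).powersetCard r := by
    intro W hW
    exact mem_powersetCard.mpr ⟨hall W hW, hcard W hW⟩
  have := card_le_card hGsub
  rw [card_powersetCard, hpair W₁ h1 W₂ h2 h12, Nat.choose_succ_self_right] at this
  omega


variable (n m : ℕ)

abbrev KV := {s : Finset (Fin m) // s.card = n}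

def star (B : Finset (Fin m)) : Finset (KV n m) :=
  Finset.univ.filter (fun A => B ⊆ A.1)

variable {n m}

lemma mem_star {B : Finset (Fin m)} {A : KV n m} : A ∈ star n m B ↔ B ⊆ A.1 := by
  simp [star]

lemma card_star (hnm : n ≤ m) {B : Finset (Fin m)} (hB : B.card ≤ n) :
    (star n m B).card = (m - B.card).choose (n - B.card) := by
  have hcompl : (Bᶜ : Finset (Fin m)).card = m - B.card := by
    rw [card_compl, Fintype.card_fin]
  rw [← hcompl, ← card_powersetCard]
  have hdisj : ∀ C ∈ powersetCard (n - B.card) Bᶜ, Disjoint B C := by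
    intro C hC
    rw [mem_powersetCard] at hC
    rw [disjoint_left]
    intro a haB haC
    exact (mem_compl.mp (hC.1 haC)) haB
  have hcardBC : ∀ C (hC : C ∈ powersetCard (n - B.card) Bᶜ), (B ∪ C).card = n := by
    intro C hC
    have h2 := (mem_powersetCard.mp hC).2
    rw [card_union_of_disjoint (hdisj C hC), h2]
    omega
  refine card_bij' (fun A _ => A.1 \ B) (fun C hC => ⟨B ∪ C, hcardBC C hC⟩) ?_ ?_ ?_ ?_
  · intro A hA
    rw [mem_powersetCard]
    constructor
    · intro x hx
      rw [mem_compl]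
      exact (mem_sdiff.mp hx).2
    · rw [card_sdiff_of_subset (mem_star.mp hA), A.2]
  · intro C hC
    exact mem_star.mpr subset_union_left
  · intro A hA
    exact Subtype.ext (union_sdiff_of_subset (mem_star.mp hA))
  · intro C hC
    exact union_sdiff_cancel_left (hdisj C hC)

lemma star_inter {B B' : Finset (Fin m)} : star n m B ∩ star n m B' = star n m (B ∪ B') := by
  ext A
  simp [mem_star, union_subset_iff, and_comm]

/-- there is an `n`-set containing `B` and avoiding `x`, provided `x ∉ B`. -/
lemma exists_avoiding (hnm : n + 1 ≤ m) {B : Finset (Fin m)} (hB : B.card ≤ n) {x : Fin m}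
    (hx : x ∉ B) : ∃ A : KV n m, B ⊆ A.1 ∧ x ∉ A.1 := by
  have hsub : B ⊆ Finset.univ.erase x := by
    intro y hy
    exact mem_erase.mpr ⟨fun h => hx (h ▸ hy), mem_univ y⟩
  obtain ⟨u, hBu, hu_sub, hu_card⟩ := exists_subsuperset_card_eq hsub hB
    (by rw [card_erase_of_mem (mem_univ x), card_univ, Fintype.card_fin]; omega)
  exact ⟨⟨u, hu_card⟩, hBu, fun h => (mem_erase.mp (hu_sub h)).1 rfl⟩

lemma star_ssubset (hnm : n + 1 ≤ m) {B B' : Finset (Fin m)} (hB' : B'.card ≤ n)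
    {x : Fin m} (hx : x ∉ B') (hxB : x ∈ B) :
    star n m (B ∪ B') ⊂ star n m B' := by
  constructor
  · intro A hA
    exact mem_star.mpr ((subset_union_right).trans (mem_star.mp hA))
  · intro hcon
    obtain ⟨A, hBA, hxA⟩ := exists_avoiding hnm hB' hx
    have : A ∈ star n m (B ∪ B') := hcon (mem_star.mpr hBA)
    exact hxA (mem_star.mp this (mem_union_left _ hxB))

section Lift
variable {n m : ℕ} (f : kneserGraph n (Fin m) ≃g kneserGraph n (Fin m))

/-- `g` encodes the action of `f` on `r`-subsets. -/
def IsLift (g : Finset (Fin m) → Finset (Fin m)) (r : ℕ) : Prop :=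
  (∀ T : Finset (Fin m), T.card = r → (g T).card = r) ∧
    (∀ (T : Finset (Fin m)) (A : KV n m), T.card = r → T ⊆ A.1 → g T ⊆ (f A).1)

lemma f_injective : Function.Injective f := f.toEquiv.injective

lemma star_image (hnm : n ≤ m) {g : Finset (Fin m) → Finset (Fin m)} {r : ℕ}
    (hg : IsLift f g r) (hr : r ≤ n) {T : Finset (Fin m)} (hT : T.card = r) :
    (star n m T).image f = star n m (g T) := by
  have hsub : (star n m T).image f ⊆ star n m (g T) := by
    intro A' hA'
    obtain ⟨A, hA, rfl⟩ := mem_image.mp hA'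
    exact mem_star.mpr (hg.2 T A hT (mem_star.mp hA))
  refine eq_of_subset_of_card_le hsub ?_
  rw [card_image_of_injective _ (f_injective f), card_star hnm (by omega : T.card ≤ n),
    card_star hnm (by rw [hg.1 T hT]; omega), hg.1 T hT, hT]

lemma lift_inj (hnm : n + 1 ≤ m) {g : Finset (Fin m) → Finset (Fin m)} {r : ℕ}
    (hg : IsLift f g r) (hr1 : 1 ≤ r) (hrn : r ≤ n) {T T' : Finset (Fin m)}
    (hT : T.card = r) (hT' : T'.card = r) (hne : T ≠ T') : g T ≠ g T' := by
  intro heq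
  -- x ∈ T \ T'
  have hTT' : ¬ T ⊆ T' := fun hsub => hne (eq_of_subset_of_card_le hsub (by omega))
  obtain ⟨x, hxT, hxT'⟩ := not_subset.mp hTT'
  have hss : star n m (T ∪ T') ⊂ star n m T' :=
    star_ssubset hnm (by omega) hxT' hxT
  have hlt : (star n m (T ∪ T')).card < (star n m T').card := card_lt_card hss
  have himg : (star n m T ∪ star n m T').image f ⊆ star n m (g T) := by
    rw [image_union, star_image f (by omega) hg hrn hT, star_image f (by omega) hg hrn hT', heq]
    exact union_subset (subset_refl _) (subset_refl _)
  have hcard := card_le_card himg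
  rw [card_image_of_injective _ (f_injective f)] at hcard
  have h1 := card_union_add_card_inter (star n m T) (star n m T')
  rw [star_inter] at h1
  have e1 : (star n m T).card = (m - r).choose (n - r) := by
    rw [card_star (by omega) (by omega : T.card ≤ n), hT]
  have e2 : (star n m T').card = (m - r).choose (n - r) := by
    rw [card_star (by omega) (by omega : T'.card ≤ n), hT']
  have e3 : (star n m (g T)).card = (m - r).choose (n - r) := by
    rw [card_star (by omega) (by rw [hg.1 T hT]; omega), hg.1 T hT]
  omega

/-- the "Johnson adjacency is preserved" property at level `r`. -/
def JProp (g : Finset (Fin m) → Finset (Fin m)) (r : ℕ) : Prop :=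
  ∀ T T' : Finset (Fin m), T.card = r → T'.card = r → T ≠ T' →
    (T ∪ T').card = r + 1 → (g T ∪ g T').card = r + 1

lemma J_lift (hnm : n + 1 ≤ m) {g : Finset (Fin m) → Finset (Fin m)} {r : ℕ}
    (hg : IsLift f g r) (hr1 : 1 ≤ r) (hrn : r + 1 ≤ n) : JProp (m := m) g r := by
  intro T T' hT hT' hne hU
  have hgne : g T ≠ g T' := lift_inj f hnm hg hr1 (by omega) hT hT' hne
  have himg : star n m (g T ∪ g T') = (star n m (T ∪ T')).image f := by
    rw [← star_inter, ← star_inter, ← star_image f (by omega) hg (by omega) hT,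
      ← star_image f (by omega) hg (by omega) hT', image_inter _ _ (f_injective f)]
  have hcard : (star n m (g T ∪ g T')).card = (m - (r+1)).choose (n - (r+1)) := by
    rw [himg, card_image_of_injective _ (f_injective f), ← hU,
      card_star (by omega) (by omega : (T ∪ T').card ≤ n)]
  set j := (g T ∪ g T').card with hj
  have hjge : r + 1 ≤ j := by
    have h1 : g T ⊆ g T ∪ g T' := subset_union_left
    have h2 : (g T).card ≤ j := card_le_card h1
    rcases Nat.lt_or_ge (r : ℕ) j with h | h
    · omega
    · exfalso
      have hgT : g T = g T ∪ g T' := eq_of_subset_of_card_le h1 (by rw [hg.1 T hT]; omega)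
      have hgT' : g T' ⊆ g T := hgT ▸ subset_union_right
      exact hgne (eq_of_subset_of_card_le hgT' (by rw [hg.1 T hT, hg.1 T' hT']) ).symm
  by_contra hcon
  have hjgt : r + 2 ≤ j := by omega
  rcases le_or_gt j n with hjn | hjn
  · have : (star n m (g T ∪ g T')).card = (m - j).choose (n - j) :=
      card_star (by omega) hjn
    have hlt : (m - j).choose (n - j) < (m - (r+1)).choose (n - (r+1)) :=
      choose_anti_strict (by omega) (by omega) hjn
    omega
  · have hle : n + 1 ≤ (g T ∪ g T').card := hjn
    have hempty : star n m (g T ∪ g T') = ∅ := by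
      rw [eq_empty_iff_forall_notMem]
      intro A hA
      have := card_le_card (mem_star.mp hA)
      rw [A.2] at this
      omega
    rw [hempty] at hcard
    have hpos : 0 < (m - (r+1)).choose (n - (r+1)) := choose_pos' (by omega) (by omega)
    simp at hcard
    omega
end Lift

section Top
variable {n m : ℕ} (f : kneserGraph n (Fin m) ≃g kneserGraph n (Fin m))

def cnbhd (A B : KV n m) : Finset (KV n m) :=
  Finset.univ.filter (fun C => Disjoint C.1 (A.1 ∪ B.1))

lemma card_cnbhd (A B : KV n m) : (cnbhd A B).card = (m - (A.1 ∪ B.1).card).choose n := by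
  have hcompl : ((A.1 ∪ B.1)ᶜ : Finset (Fin m)).card = m - (A.1 ∪ B.1).card := by
    rw [card_compl, Fintype.card_fin]
  rw [← hcompl, ← card_powersetCard]
  apply card_bij (fun C _ => C.1)
  · intro C hC
    rw [mem_powersetCard]
    refine ⟨?_, C.2⟩
    intro x hx
    rw [mem_compl]
    have hd := (mem_filter.mp hC).2
    exact fun hmem => (disjoint_left.mp hd) hx hmem
  · intro C hC C' hC' h
    exact Subtype.ext h
  · intro D hD
    rw [mem_powersetCard] at hD
    refine ⟨⟨D, hD.2⟩, ?_, rfl⟩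
    rw [cnbhd, mem_filter]
    refine ⟨mem_univ _, disjoint_left.mpr fun x hx hmem => ?_⟩
    exact (mem_compl.mp (hD.1 hx)) hmem

lemma cnbhd_adj (hn : 1 ≤ n) (A B : KV n m) (C : KV n m) :
    C ∈ cnbhd A B ↔ (kneserGraph n (Fin m)).Adj A C ∧ (kneserGraph n (Fin m)).Adj B C := by
  rw [cnbhd, mem_filter, disjoint_union_right]
  constructor
  · rintro ⟨-, h1, h2⟩
    have hne1 : A ≠ C := by
      rintro rfl
      have he : A.1 = ∅ := disjoint_self.mp h1.symm
      have hc := A.2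
      rw [he, card_empty] at hc
      omega
    have hne2 : B ≠ C := by
      rintro rfl
      have he : B.1 = ∅ := disjoint_self.mp h2.symm
      have hc := B.2
      rw [he, card_empty] at hc
      omega
    exact ⟨⟨hne1, h1.symm⟩, ⟨hne2, h2.symm⟩⟩
  · rintro ⟨⟨-, h1⟩, ⟨-, h2⟩⟩
    exact ⟨mem_univ _, h1.symm, h2.symm⟩

lemma image_cnbhd (hn : 1 ≤ n) (A B : KV n m) :
    (cnbhd A B).image f = cnbhd (f A) (f B) := by
  ext C'
  rw [mem_image]
  constructor
  · rintro ⟨C, hC, rfl⟩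
    rw [cnbhd_adj hn] at hC ⊢
    exact ⟨f.map_adj_iff.mpr hC.1, f.map_adj_iff.mpr hC.2⟩
  · intro hC'
    refine ⟨f.symm C', ?_, by simp⟩
    rw [cnbhd_adj hn] at hC' ⊢
    constructor
    · have := f.symm.map_adj_iff.mpr hC'.1
      simpa using this
    · have := f.symm.map_adj_iff.mpr hC'.2
      simpa using this

lemma union_card_ge (A B : KV n m) (hne : A ≠ B) : n + 1 ≤ (A.1 ∪ B.1).card := by
  have h1 : A.1 ⊆ A.1 ∪ B.1 := subset_union_left
  have h2 := card_le_card h1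
  rcases Nat.lt_or_ge n (A.1 ∪ B.1).card with h | h
  · omega
  · exfalso
    have hA : A.1 = A.1 ∪ B.1 := eq_of_subset_of_card_le h1 (by rw [A.2]; omega)
    have hB : B.1 ⊆ A.1 := hA ▸ subset_union_right
    exact hne (Subtype.ext (eq_of_subset_of_card_le hB (by rw [A.2, B.2])).symm)

lemma J_top (hm : 2 * n + 1 ≤ m) (hn : 1 ≤ n) (A B : KV n m) (hne : A ≠ B)
    (hU : (A.1 ∪ B.1).card = n + 1) : ((f A).1 ∪ (f B).1).card = n + 1 := by
  have hfne : f A ≠ f B := fun h => hne (f_injective f h)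
  have hcards : (cnbhd (f A) (f B)).card = (cnbhd A B).card := by
    rw [← image_cnbhd f hn, card_image_of_injective _ (f_injective f)]
  rw [card_cnbhd, card_cnbhd, hU] at hcards
  set j := ((f A).1 ∪ (f B).1).card with hj
  have hjge : n + 1 ≤ j := union_card_ge (f A) (f B) hfne
  have hjle : j ≤ 2 * n := by
    have := card_union_le (f A).1 (f B).1
    rw [(f A).2, (f B).2] at this
    omega
  by_contra hcon
  have hjge2 : n + 2 ≤ j := by omega
  have hmono : (m - j).choose n ≤ (m - (n+2)).choose n :=
    Nat.choose_le_choose n (by omega)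
  have key : ∀ s : ℕ, n - 1 ≤ s → s.choose n < (s+1).choose n := by
    intro s hs
    have h := Nat.choose_succ_succ s (n-1)
    simp only [Nat.succ_eq_add_one] at h
    have hn1 : n - 1 + 1 = n := by omega
    rw [hn1] at h
    have hpos : 0 < s.choose (n-1) := Nat.choose_pos hs
    omega
  have hstrict : (m - (n+2)).choose n < (m - (n+1)).choose n := by
    have h1 : m - (n+1) = (m - (n+2)) + 1 := by omega
    rw [h1]
    exact key _ (by omega)
  omega
end Top

section Step
variable {n m : ℕ} (f : kneserGraph n (Fin m) ≃g kneserGraph n (Fin m))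

open Classical in
lemma lift_step (hm : 2 * n + 1 ≤ m) {g : Finset (Fin m) → Finset (Fin m)} {r : ℕ}
    (hg : IsLift f g r) (hJ : JProp (m := m) g r) (hr2 : 2 ≤ r) (hrn : r ≤ n) :
    ∃ g' : Finset (Fin m) → Finset (Fin m),
      IsLift f g' (r - 1) ∧ JProp (m := m) g' (r - 1) := by
  have hnm : n + 1 ≤ m := by omega
  -- the family of images of r-supersets of U
  have key : ∀ U : Finset (Fin m), U.card = r - 1 →
      ∃ V : Finset (Fin m), V.card = r - 1 ∧ ∀ x ∉ U, V ⊆ g (insert x U) := by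
    intro U hU
    set G : Finset (Finset (Fin m)) := Uᶜ.image (fun x => g (insert x U)) with hG
    have hins : ∀ x ∉ U, (insert x U).card = r := by
      intro x hx
      rw [card_insert_of_notMem hx, hU]
      omega
    have hinj : Set.InjOn (fun x => g (insert x U)) ↑(Uᶜ : Finset (Fin m)) := by
      intro x hx y hy hxy
      by_contra hne
      have hxU : x ∉ U := mem_compl.mp (mem_coe.mp hx)
      have hyU : y ∉ U := mem_compl.mp (mem_coe.mp hy)
      have hneins : insert x U ≠ insert y U := by
        intro h
        exact hne (by
          have : x ∈ insert y U := h ▸ mem_insert_self x U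
          rcases mem_insert.mp this with h' | h'
          · exact h'
          · exact absurd h' hxU)
      exact lift_inj f hnm hg (by omega) hrn (hins x hxU) (hins y hyU) hneins hxy
    have hGcard : G.card = m - (r - 1) := by
      rw [hG, card_image_of_injOn hinj, card_compl, Fintype.card_fin, hU]
    have hsun := sunflower r (by omega) G (by omega) ?_ ?_
    · obtain ⟨V, hV, hVsub⟩ := hsun
      refine ⟨V, hV, fun x hx => hVsub _ ?_⟩
      rw [hG, mem_image]
      exact ⟨x, mem_compl.mpr hx, rfl⟩
    · intro W hW
      obtain ⟨x, hx, rfl⟩ := mem_image.mp hW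
      exact hg.1 _ (hins x (mem_compl.mp hx))
    · intro W hW W' hW' hne
      obtain ⟨x, hx, rfl⟩ := mem_image.mp hW
      obtain ⟨y, hy, rfl⟩ := mem_image.mp hW'
      have hxy : x ≠ y := fun h => hne (h ▸ rfl)
      have hxU := mem_compl.mp hx
      have hyU := mem_compl.mp hy
      have hneins : insert x U ≠ insert y U := by
        intro h
        have : x ∈ insert y U := h ▸ mem_insert_self x U
        rcases mem_insert.mp this with h' | h'
        · exact hxy h'
        · exact hxU h'
      refine hJ _ _ (hins x hxU) (hins y hyU) hneins ?_
      have : insert x U ∪ insert y U = insert x (insert y U) := by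
        ext z; simp [mem_insert, mem_union]; tauto
      rw [this, card_insert_of_notMem, hins y hyU]
      simp [mem_insert]
      exact ⟨hxy, hxU⟩
  -- define g'
  refine ⟨fun U => if h : U.card = r - 1 then choose (key U h) else U, ?_, ?_⟩
  · constructor
    · intro T hT
      simp only [dif_pos hT]
      exact (choose_spec (key T hT)).1
    · intro T A hT hTA
      simp only [dif_pos hT]
      obtain ⟨x, hx⟩ : (A.1 \ T).Nonempty := by
        rw [← card_pos, card_sdiff_of_subset hTA, A.2]
        omega
      rw [mem_sdiff] at hx
      have hsub : choose (key T hT) ⊆ g (insert x T) :=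
        (choose_spec (key T hT)).2 x hx.2
      have hins : insert x T ⊆ A.1 := insert_subset hx.1 hTA
      exact hsub.trans (hg.2 _ A (by rw [card_insert_of_notMem hx.2, hT]; omega) hins)
  · -- JProp at r-1 via J_lift, which needs the IsLift property we just proved
    have hlift : IsLift f (fun U => if h : U.card = r - 1 then choose (key U h) else U) (r-1) := by
      constructor
      · intro T hT
        simp only [dif_pos hT]
        exact (choose_spec (key T hT)).1
      · intro T A hT hTA
        simp only [dif_pos hT]
        obtain ⟨x, hx⟩ : (A.1 \ T).Nonempty := by
          rw [← card_pos, card_sdiff_of_subset hTA, A.2]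
          omega
        rw [mem_sdiff] at hx
        have hsub : choose (key T hT) ⊆ g (insert x T) :=
          (choose_spec (key T hT)).2 x hx.2
        have hins : insert x T ⊆ A.1 := insert_subset hx.1 hTA
        exact hsub.trans (hg.2 _ A (by rw [card_insert_of_notMem hx.2, hT]; omega) hins)
    exact J_lift f hnm hlift (by omega) (by omega)

lemma exists_lift (hm : 2 * n + 1 ≤ m) (hn : 2 ≤ n) :
    ∀ j : ℕ, j ≤ n - 1 → ∃ g : Finset (Fin m) → Finset (Fin m),
      IsLift f g (n - j) ∧ JProp (m := m) g (n - j) := by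
  intro j
  induction j with
  | zero =>
    intro _
    refine ⟨fun T => if h : T.card = n then (f ⟨T, h⟩).1 else T, ⟨?_, ?_⟩, ?_⟩
    · intro T hT
      simp only [Nat.sub_zero] at hT ⊢
      simp only [dif_pos hT]
      exact (f ⟨T, hT⟩).2
    · intro T A hT hTA
      simp only [Nat.sub_zero] at hT
      simp only [dif_pos hT]
      have hEq : (⟨T, hT⟩ : KV n m) = A :=
        Subtype.ext (eq_of_subset_of_card_le hTA (by rw [A.2, hT]))
      rw [hEq]
    · intro T T' hT hT' hne hU
      simp only [Nat.sub_zero] at hT hT' hU ⊢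
      rw [dif_pos hT, dif_pos hT']
      exact J_top f hm (by omega) ⟨T, hT⟩ ⟨T', hT'⟩ (fun h => hne (congrArg Subtype.val h)) hU
  | succ k ih =>
    intro hk
    obtain ⟨g, hg, hJ⟩ := ih (by omega)
    obtain ⟨g', hg', hJ'⟩ := lift_step f hm hg hJ (by omega) (by omega)
    have : n - k - 1 = n - (k + 1) := by omega
    rw [this] at hg' hJ'
    exact ⟨g', hg', hJ'⟩
end Step

section Main
variable {n m : ℕ}

lemma part1_big (hm : 2 * n + 1 ≤ m) (hn : 2 ≤ n)
    (f : kneserGraph n (Fin m) ≃g kneserGraph n (Fin m)) :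
    ∃ π : Equiv.Perm (Fin m), ∀ v : KV n m, (f v).1 = v.1.image π := by
  have hnm : n + 1 ≤ m := by omega
  obtain ⟨g, hg, -⟩ := exists_lift f hm hn (n - 1) (le_refl _)
  have h1 : n - (n - 1) = 1 := by omega
  rw [h1] at hg
  -- extract a function on points
  have hsingle : ∀ x : Fin m, ∃ y, g {x} = {y} := by
    intro x
    exact card_eq_one.mp (hg.1 {x} (card_singleton x))
  choose p hp using hsingle
  have hmem : ∀ (x : Fin m) (A : KV n m), x ∈ A.1 → p x ∈ (f A).1 := by
    intro x A hx
    have := hg.2 {x} A (card_singleton x) (singleton_subset_iff.mpr hx)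
    rw [hp x] at this
    exact this (mem_singleton_self _)
  have hpinj : Function.Injective p := by
    intro x y hxy
    by_contra hne
    -- find disjoint n-sets A ∋ x, B ∋ y
    have hyx : y ∉ ({x} : Finset (Fin m)) := by
      simp only [mem_singleton]; exact fun h => hne h.symm
    obtain ⟨A, hxA', hyA⟩ := exists_avoiding (n := n) (B := {x}) (x := y) hnm
      (by rw [card_singleton]; omega) hyx
    have hxA : x ∈ A.1 := hxA' (mem_singleton_self x)
    have hyc : ({y} : Finset (Fin m)) ⊆ A.1ᶜ := by
      simpa using hyA
    obtain ⟨B, hyB', hBsub, hBcard⟩ := exists_subsuperset_card_eq (n := n) hyc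
      (by rw [card_singleton]; omega)
      (by rw [card_compl, Fintype.card_fin, A.2]; omega)
    have hyB : y ∈ B := hyB' (mem_singleton_self y)
    have hdisj : Disjoint A.1 B := by
      rw [disjoint_left]
      intro a haA haB
      exact (mem_compl.mp (hBsub haB)) haA
    set vB : KV n m := ⟨B, hBcard⟩ with hvB
    have hAB : (⟨A.1, A.2⟩ : KV n m) ≠ vB := by
      intro h
      have : A.1 = B := congrArg Subtype.val h
      exact (disjoint_left.mp hdisj hxA) (this ▸ hxA)
    have hadj : (kneserGraph n (Fin m)).Adj ⟨A.1, A.2⟩ vB := ⟨hAB, hdisj⟩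
    have hfadj := f.map_adj_iff.mpr hadj
    have hd : Disjoint (f ⟨A.1, A.2⟩).1 (f vB).1 := hfadj.2
    have h1 : p x ∈ (f ⟨A.1, A.2⟩).1 := hmem x _ hxA
    have h2 : p y ∈ (f vB).1 := hmem y vB hyB
    rw [← hxy] at h2
    exact (disjoint_left.mp hd h1) h2
  have hpbij : Function.Bijective p := Finite.injective_iff_bijective.mp hpinj
  refine ⟨Equiv.ofBijective p hpbij, fun v => ?_⟩
  have hsub : v.1.image (Equiv.ofBijective p hpbij) ⊆ (f v).1 := by
    rw [image_subset_iff]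
    intro x hx
    exact hmem x v hx
  refine (eq_of_subset_of_card_le hsub ?_).symm
  rw [card_image_of_injective _ (Equiv.ofBijective p hpbij).injective, v.2, (f v).2]

lemma part1_small (hm : m = n + 1) (hn : 2 ≤ n)
    (f : kneserGraph n (Fin m) ≃g kneserGraph n (Fin m)) :
    ∃ π : Equiv.Perm (Fin m), ∀ v : KV n m, (f v).1 = v.1.image π := by
  have hcard : ∀ x : Fin m, (Finset.univ.erase x).card = n := by
    intro x
    rw [card_erase_of_mem (mem_univ x), card_univ, Fintype.card_fin, hm]
    omega
  set vx : Fin m → KV n m := fun x => ⟨Finset.univ.erase x, hcard x⟩ with hvx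
  have hinj : Function.Injective vx := by
    intro x y hxy
    by_contra hne
    have h1 : x ∈ Finset.univ.erase y := mem_erase.mpr ⟨hne, mem_univ x⟩
    have h2 : (vx x).1 = (vx y).1 := congrArg Subtype.val hxy
    rw [hvx] at h2
    simp only at h2
    rw [← h2] at h1
    exact (mem_erase.mp h1).1 rfl
  have hsurj : Function.Surjective vx := by
    intro v
    have hcc : (v.1ᶜ : Finset (Fin m)).card = 1 := by
      rw [card_compl, Fintype.card_fin, v.2, hm]
      omega
    obtain ⟨x, hx⟩ := card_eq_one.mp hcc
    refine ⟨x, Subtype.ext ?_⟩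
    have : v.1 = ({x}ᶜ : Finset (Fin m)) := by
      rw [← hx, compl_compl]
    rw [hvx]
    simp only
    rw [this, compl_singleton]
  set c : Fin m ≃ KV n m := Equiv.ofBijective vx ⟨hinj, hsurj⟩ with hc
  refine ⟨(c.trans f.toEquiv).trans c.symm, fun v => ?_⟩
  set π : Equiv.Perm (Fin m) := (c.trans f.toEquiv).trans c.symm with hπ
  set x := c.symm v with hx
  have hv : v = vx x := by
    rw [hx]
    exact (c.apply_symm_apply v).symm
  have hfv : f v = vx (π x) := by
    have : π x = c.symm (f (c x)) := rfl
    rw [this]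
    have h2 : c (c.symm (f (c x))) = f (c x) := c.apply_symm_apply _
    have h3 : (c : Fin m → KV n m) (c.symm (f (c x))) = vx (c.symm (f (c x))) := rfl
    rw [← h3, h2]
    congr 1
  rw [hfv, hv]
  show (Finset.univ.erase (π x)) = (Finset.univ.erase x).image π
  rw [image_erase π.injective, Finset.image_univ_equiv]

lemma part1 (hm1 : n + 1 ≤ m) (hm2 : m = n + 1 ∨ 2 * n + 1 ≤ m) (hn : 2 ≤ n)
    (f : kneserGraph n (Fin m) ≃g kneserGraph n (Fin m)) :
    ∃ π : Equiv.Perm (Fin m), ∀ v : KV n m, (f v).1 = v.1.image π := by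
  rcases hm2 with h | h
  · exact part1_small h hn f
  · exact part1_big h hn f
end Main

section Iso
variable {n m : ℕ}

lemma perm_ext (hn : 1 ≤ n) (hnm : n + 1 ≤ m) {π σ : Equiv.Perm (Fin m)}
    (h : ∀ s : Finset (Fin m), s.card = n → s.image π = s.image σ) : π = σ := by
  ext x
  by_contra hne
  set y := π.symm (σ x) with hy
  have hyx : y ≠ x := by
    intro h'
    apply hne
    have : π y = σ x := π.apply_symm_apply (σ x)
    rw [h'] at this
    rw [this]
  have hxy : x ∉ ({y}ᶜ : Finset (Fin m))ᶜ := by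
    simp [hyx.symm]
  obtain ⟨A, hxA', hAsub, hAcard⟩ := exists_subsuperset_card_eq (n := n)
    (singleton_subset_iff.mpr (mem_compl.mpr (by simpa using hyx.symm) : x ∈ ({y} : Finset (Fin m))ᶜ))
    (by rw [card_singleton]; omega)
    (by rw [card_compl, Fintype.card_fin, card_singleton]; omega)
  have hxA : x ∈ A := hxA' (mem_singleton_self x)
  have hyA : y ∉ A := fun hy' => by simpa using mem_compl.mp (hAsub hy')
  have himg := h A hAcard
  have hσ : σ x ∈ A.image σ := mem_image_of_mem σ hxA
  rw [← himg, mem_image] at hσ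
  obtain ⟨z, hzA, hz⟩ := hσ
  have : z = y := by
    have := π.injective (a₁ := z) (a₂ := y)
    apply this
    rw [hz, hy, π.apply_symm_apply]
  exact hyA (this ▸ hzA)

/-- the graph automorphism induced by a permutation of the ground set. -/
def permIso (π : Equiv.Perm (Fin m)) :
    kneserGraph n (Fin m) ≃g kneserGraph n (Fin m) where
  toFun v := ⟨v.1.image π, by rw [card_image_of_injective _ π.injective, v.2]⟩
  invFun v := ⟨v.1.image π.symm, by rw [card_image_of_injective _ π.symm.injective, v.2]⟩
  left_inv v := by
    apply Subtype.ext
    simp [image_image, Function.comp_def]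
  right_inv v := by
    apply Subtype.ext
    simp [image_image, Function.comp_def]
  map_rel_iff' := by
    intro a b
    show (_ ≠ _ ∧ Disjoint _ _) ↔ (a ≠ b ∧ Disjoint a.1 b.1)
    constructor
    · rintro ⟨h1, h2⟩
      simp only [Equiv.coe_fn_mk] at h1 h2
      refine ⟨fun h => h1 (by rw [h]), ?_⟩
      rw [disjoint_image π.injective] at h2
      exact h2
    · rintro ⟨h1, h2⟩
      constructor
      · intro h
        apply h1
        apply Subtype.ext
        have := congrArg Subtype.val h
        exact image_injective π.injective this
      · exact (disjoint_image π.injective).mpr h2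

def permHom (n m : ℕ) :
    Equiv.Perm (Fin m) →* (kneserGraph n (Fin m) ≃g kneserGraph n (Fin m)) where
  toFun := permIso
  map_one' := by
    apply RelIso.ext
    intro v
    apply Subtype.ext
    show v.1.image _ = v.1
    simp
  map_mul' π σ := by
    apply RelIso.ext
    intro v
    apply Subtype.ext
    show v.1.image (π * σ) = ((v.1.image σ)).image π
    rw [image_image]
    rfl

lemma permHom_bijective (hn : 2 ≤ n) (hnm : n + 1 ≤ m)
    (hm2 : m = n + 1 ∨ 2 * n + 1 ≤ m) :
    Function.Bijective (permHom n m) := by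
  constructor
  · intro π σ h
    apply perm_ext (n := n) (by omega) hnm
    intro s hs
    have := congrArg (fun (F : kneserGraph n (Fin m) ≃g kneserGraph n (Fin m)) =>
      (F ⟨s, hs⟩).1) h
    exact this
  · intro F
    obtain ⟨π, hπ⟩ := part1 hnm hm2 hn F
    refine ⟨π, ?_⟩
    apply RelIso.ext
    intro v
    apply Subtype.ext
    show v.1.image π = (F v).1
    exact (hπ v).symm

end Iso
end KneserAux

/-- For `n ≥ 2` and `d ≥ 1`, every automorphism of the Kneser graph `K(n,S)` with
`S = {1,…,nd+1}` is induced by a permutation of `S`; in fact its automorphism group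
is isomorphic to `Sym(S)`. -/
theorem stmt_1 (n d : ℕ) (hn : 2 ≤ n) (hd : 1 ≤ d) :
    (∀ f : kneserGraph n (Fin (n * d + 1)) ≃g kneserGraph n (Fin (n * d + 1)),
        ∃ π : Equiv.Perm (Fin (n * d + 1)),
          ∀ v : {s : Finset (Fin (n * d + 1)) // s.card = n},
            (f v : {s : Finset (Fin (n * d + 1)) // s.card = n}).1 = v.1.image π) ∧
      Nonempty ((kneserGraph n (Fin (n * d + 1)) ≃g kneserGraph n (Fin (n * d + 1)))
        ≃* Equiv.Perm (Fin (n * d + 1))) := by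
  have hnm : n + 1 ≤ n * d + 1 := by nlinarith
  have hm2 : n * d + 1 = n + 1 ∨ 2 * n + 1 ≤ n * d + 1 := by
    rcases Nat.lt_or_ge d 2 with h | h
    · left
      have : d = 1 := by omega
      rw [this, mul_one]
    · right
      nlinarith
  constructor
  · exact fun f => KneserAux.part1 hnm hm2 hn f
  · exact ⟨(MulEquiv.ofBijective (KneserAux.permHom n (n * d + 1))
      (KneserAux.permHom_bijective hn hnm hm2)).symm⟩
end

section
/- Let F = ∏_{n∈ℤ} G_n be the unrestricted product of copies G_n = G of a group G, and let σ : F → F be the shift automorphism, σ((f_n)_{n∈ℤ}) = (f_{n−1})_{n∈ℤ}. Then the map F → F given by f' ↦ f'⁻¹ · σ(f') is surjective. Consequently, in the semidirect product F ⋊_σ ℤ, the subgroup F equals the set of commutators [f', σ] with f' ∈ F, so F is contained in the commutator subgroup. -/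
/-- The shift automorphism of the unrestricted product `∏_{n ∈ ℤ} G`:
`(σ f) n = f (n − 1)`. -/
def shiftAut (G : Type*) [Group G] : (ℤ → G) ≃* (ℤ → G) where
  toFun f n := f (n - 1)
  invFun f n := f (n + 1)
  left_inv f := funext fun n => by simp
  right_inv f := funext fun n => by simp
  map_mul' f g := rfl

/-- The action of `ℤ` (written multiplicatively) on `∏_{n ∈ ℤ} G` by powers of the
shift automorphism. -/
def shiftAction (G : Type*) [Group G] : Multiplicative ℤ →* MulAut (ℤ → G) :=
  zpowersHom (MulAut (ℤ → G)) (shiftAut G)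

section aux
variable {G : Type*} [Group G]

def stmt8fwd (f : ℤ → G) : ℕ → G
  | 0 => 1
  | k+1 => stmt8fwd f k * (f (k+1))⁻¹

def stmt8bwd (f : ℤ → G) : ℕ → G
  | 0 => 1
  | k+1 => stmt8bwd f k * f (-(k:ℤ))

def stmt8sol (f : ℤ → G) : ℤ → G
  | Int.ofNat k => stmt8fwd f k
  | Int.negSucc k => stmt8bwd f (k+1)

lemma stmt8key (f : ℤ → G) (n : ℤ) : stmt8sol f (n - 1) = stmt8sol f n * f n := by
  cases n with
  | ofNat k =>
    cases k with
    | zero =>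
      show stmt8sol f (-1) = stmt8sol f 0 * f 0
      show stmt8bwd f 1 = stmt8fwd f 0 * f 0
      simp [stmt8bwd, stmt8fwd]
    | succ k =>
      have h1 : (Int.ofNat (k+1)) - 1 = Int.ofNat k := by simp
      rw [h1]
      show stmt8fwd f k = stmt8fwd f (k+1) * f (Int.ofNat (k+1))
      have : f (Int.ofNat (k+1)) = f ((k:ℤ)+1) := by norm_num
      rw [this]
      simp [stmt8fwd]
  | negSucc k =>
    have h1 : (Int.negSucc k) - 1 = Int.negSucc (k+1) := by
      simp [Int.negSucc_eq]; ring
    rw [h1]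
    show stmt8bwd f (k+2) = stmt8bwd f (k+1) * f (Int.negSucc k)
    have : f (Int.negSucc k) = f (-((k+1:ℕ) : ℤ)) := by norm_num [Int.negSucc_eq]
    rw [this]
    rfl

lemma stmt8surj : Function.Surjective (fun f' : ℤ → G => f'⁻¹ * shiftAut G f') := by
  intro f
  refine ⟨stmt8sol f, funext fun n => ?_⟩
  show (stmt8sol f n)⁻¹ * stmt8sol f (n - 1) = f n
  rw [stmt8key f n]
  group

end aux

open scoped commutatorElement

/-- For the unrestricted product `F = ∏_{n ∈ ℤ} G` with shift automorphism `σ`, the map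
`f' ↦ f'⁻¹ * σ f'` is surjective.  Consequently, in the semidirect product `F ⋊_σ ℤ`
every element of `F` is a commutator `[f', σ]`, so `F` is contained in the commutator
subgroup. -/
theorem stmt_8 (G : Type*) [Group G] :
    Function.Surjective (fun f' : ℤ → G => f'⁻¹ * shiftAut G f') ∧
    (∀ f : ℤ → G, ∃ f' : ℤ → G,
      (SemidirectProduct.inl f : (ℤ → G) ⋊[shiftAction G] Multiplicative ℤ) =
        ⁅(SemidirectProduct.inl f' : (ℤ → G) ⋊[shiftAction G] Multiplicative ℤ),
          SemidirectProduct.inr (Multiplicative.ofAdd 1)⁆) ∧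
    (SemidirectProduct.inl : (ℤ → G) →* (ℤ → G) ⋊[shiftAction G] Multiplicative ℤ).range
      ≤ commutator ((ℤ → G) ⋊[shiftAction G] Multiplicative ℤ) := by
  have hφ : shiftAction G (Multiplicative.ofAdd 1) = shiftAut G := by
    simp [shiftAction]
  have hcomm : ∀ f : ℤ → G, ∃ f' : ℤ → G,
      (SemidirectProduct.inl f : (ℤ → G) ⋊[shiftAction G] Multiplicative ℤ) =
        ⁅(SemidirectProduct.inl f' : (ℤ → G) ⋊[shiftAction G] Multiplicative ℤ),
          SemidirectProduct.inr (Multiplicative.ofAdd 1)⁆ := by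
    intro f
    obtain ⟨g, hg⟩ := stmt8surj (G := G) f
    refine ⟨g⁻¹, ?_⟩
    rw [commutatorElement_def]
    rw [mul_assoc, mul_assoc, ← mul_assoc (SemidirectProduct.inr _),
      ← map_inv SemidirectProduct.inl, ← map_inv SemidirectProduct.inr,
      ← SemidirectProduct.inl_aut, ← map_mul, hφ]
    simp only at hg
    rw [← hg]
    congr 1
    simp
  refine ⟨stmt8surj, hcomm, ?_⟩
  rintro x ⟨f, rfl⟩
  obtain ⟨f', hf'⟩ := hcomm f
  rw [hf']
  exact Subgroup.commutator_mem_commutator (Subgroup.mem_top _) (Subgroup.mem_top _)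
end
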